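/- For every real η > 0, every integer n ≥ 2, and every s ∈ S_n⁺, the maximum-likelihood estimate satisfies P[â_ML(U₁ⁿ) − a > η] ≤ ∏_{ℓ=1}^{n−1} (1 − 2σ²α_ℓ)^{−1/2}; equivalently, −(1/n)·log P[â_ML(U₁ⁿ) − a > η] ≥ sup_{s ∈ S_n⁺} (1/(2n)) Σ_{ℓ=1}^{n−1} log(1 − 2σ²α_ℓ). -/

import Mathlib

open MeasureTheory ProbabilityTheory Finset

/-- The sequence `α_ℓ` from the paper: `α₁ = (σ²s² − 2ηs)/2` and
`α_ℓ = ([a² + 2σ²s(a+η)]·α_{ℓ−1} + α₁)/(1 − 2σ²α_{ℓ−1})` for `ℓ ≥ 2`. -/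
noncomputable def alphaSeq (a σ η s : ℝ) : ℕ → ℝ
  | 0 => 0
  | 1 => (σ ^ 2 * s ^ 2 - 2 * η * s) / 2
  | (ℓ + 2) =>
      ((a ^ 2 + 2 * σ ^ 2 * s * (a + η)) * alphaSeq a σ η s (ℓ + 1)
            + (σ ^ 2 * s ^ 2 - 2 * η * s) / 2)
        / (1 - 2 * σ ^ 2 * alphaSeq a σ η s (ℓ + 1))

/-- The set `S_n⁺ = {s > 0 : α_ℓ < 1/(2σ²) for all 1 ≤ ℓ ≤ n}`. -/
def Splus (a σ η : ℝ) (n : ℕ) : Set ℝ :=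
  {s : ℝ | 0 < s ∧ ∀ ℓ ∈ Finset.Icc 1 n, alphaSeq a σ η s ℓ < 1 / (2 * σ ^ 2)}

/-- The maximum-likelihood estimate `â_ML(u₁ⁿ) = (Σ_{i=1}^{n−1} uᵢu_{i+1}) / (Σ_{i=1}^{n−1} uᵢ²)`. -/
noncomputable def aML {Ω : Type*} (U : ℕ → Ω → ℝ) (n : ℕ) (ω : Ω) : ℝ :=
  (∑ i ∈ Finset.Icc 1 (n - 1), U i ω * U (i + 1) ω)
    / (∑ i ∈ Finset.Icc 1 (n - 1), (U i ω) ^ 2)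


open Real
open scoped ENNReal


lemma integral_exp_neg_mul_sq_add (b c : ℝ) (hb : 0 < b) :
    ∫ x : ℝ, Real.exp (-(b * x ^ 2) + c * x)
      = Real.sqrt (π / b) * Real.exp (c ^ 2 / (4 * b)) := by
  have h1 : ∀ x : ℝ, -(b * x ^ 2) + c * x
      = -(b * (x - c / (2 * b)) ^ 2) + c ^ 2 / (4 * b) := by
    intro x; field_simp; ring
  simp_rw [h1, Real.exp_add, integral_mul_const]
  have h2 : ∫ x : ℝ, Real.exp (-(b * (x - c / (2 * b)) ^ 2))
      = ∫ x : ℝ, Real.exp (-(b * x ^ 2)) := by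
    exact integral_sub_right_eq_self (fun y => Real.exp (-(b * y ^ 2))) (c / (2 * b))
  rw [h2]
  simp_rw [← neg_mul]
  rw [integral_gaussian b]

lemma integrable_exp_neg_mul_sq_add (b c : ℝ) (hb : 0 < b) :
    Integrable (fun x : ℝ => Real.exp (-(b * x ^ 2) + c * x)) := by
  have h1 : ∀ x : ℝ, -(b * x ^ 2) + c * x
      = -(b * (x - c / (2 * b)) ^ 2) + c ^ 2 / (4 * b) := by
    intro x; field_simp; ring
  simp_rw [h1, Real.exp_add]
  have : Integrable (fun x : ℝ => Real.exp (-(b * (x - c / (2 * b)) ^ 2))) := by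
    have := (integrable_exp_neg_mul_sq hb).comp_sub_right (c / (2 * b))
    simpa [neg_mul] using this
  exact this.mul_const _

noncomputable def Grec (a : ℝ) : ℕ → (ℕ → ℝ) → ℝ
  | 0, _ => 0
  | (i + 1), z => a * Grec a i z + z (i + 1)

noncomputable def liftIcc (m : ℕ) (v : {x // x ∈ Finset.Icc 1 m} → ℝ) : ℕ → ℝ :=
  fun j => if h : j ∈ Finset.Icc 1 m then v ⟨j, h⟩ else 0

lemma measurable_liftIcc_apply (m j : ℕ) :
    Measurable (fun v : {x // x ∈ Finset.Icc 1 m} → ℝ => liftIcc m v j) := by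
  unfold liftIcc
  by_cases h : j ∈ Finset.Icc 1 m
  · simpa [h] using measurable_pi_apply (⟨j, h⟩ : {x // x ∈ Finset.Icc 1 m})
  · simp [h]

lemma measurable_Grec_lift (a : ℝ) (m : ℕ) :
    ∀ i, Measurable (fun v : {x // x ∈ Finset.Icc 1 m} → ℝ => Grec a i (liftIcc m v)) := by
  intro i
  induction i with
  | zero => simp [Grec]
  | succ i ih =>
      simp only [Grec]
      exact (ih.const_mul a).add (measurable_liftIcc_apply m (i + 1))


lemma alpha_rec (a σ η s : ℝ) (hσ : σ ≠ 0) (k : ℕ)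
    (hD : 1 - 2 * σ ^ 2 * alphaSeq a σ η s k ≠ 0) :
    ∀ u w : ℝ,
      alphaSeq a σ η s k * a ^ 2 * u ^ 2 - s * η * u ^ 2 + w
          + σ ^ 2 * ((2 * alphaSeq a σ η s k * a + s) * u) ^ 2
            / (2 * (1 - 2 * σ ^ 2 * alphaSeq a σ η s k))
        = alphaSeq a σ η s (k + 1) * u ^ 2 + w := by
  intro u w
  match k with
  | 0 =>
      simp only [alphaSeq]
      field_simp
      ring
  | (k + 1) =>
      have h2 : alphaSeq a σ η s (k + 2)
          = ((a ^ 2 + 2 * σ ^ 2 * s * (a + η)) * alphaSeq a σ η s (k + 1)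
              + (σ ^ 2 * s ^ 2 - 2 * η * s) / 2)
            / (1 - 2 * σ ^ 2 * alphaSeq a σ η s (k + 1)) := rfl
      rw [h2]
      have hD2 : 2 * (1 - 2 * σ ^ 2 * alphaSeq a σ η s (k + 1)) ≠ 0 := mul_ne_zero two_ne_zero hD
      rw [div_mul_eq_mul_div, div_add' _ _ _ hD, add_div' _ _ _ hD2, div_eq_div_iff hD2 hD]
      ring

lemma lintegral_exp_quadratic_gaussian {σ : ℝ} (hσ : 0 < σ) {α : ℝ}
    (hα : α < 1 / (2 * σ ^ 2)) (β γ : ℝ) :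
    ∫⁻ z, ENNReal.ofReal (Real.exp (α * z ^ 2 + β * z + γ))
        ∂(gaussianReal 0 ⟨σ ^ 2, sq_nonneg σ⟩)
      = ENNReal.ofReal ((1 - 2 * σ ^ 2 * α) ^ (-(1 / 2 : ℝ))
          * Real.exp (γ + σ ^ 2 * β ^ 2 / (2 * (1 - 2 * σ ^ 2 * α)))) := by
  have hσ2 : (0:ℝ) < σ ^ 2 := by positivity
  have hσ0 : σ ≠ 0 := ne_of_gt hσ
  have hD : (0:ℝ) < 1 - 2 * σ ^ 2 * α := by
    have := (lt_div_iff₀ (by positivity : (0:ℝ) < 2 * σ ^ 2)).mp hα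
    nlinarith
  set b : ℝ := 1 / (2 * σ ^ 2) - α with hbdef
  have hb : 0 < b := sub_pos.mpr hα
  have hv : (⟨σ ^ 2, sq_nonneg σ⟩ : NNReal) ≠ 0 := by
    simp [← NNReal.coe_ne_zero]; positivity
  rw [gaussianReal_of_var_ne_zero _ hv]
  refine (lintegral_withDensity_eq_lintegral_mul _ (measurable_gaussianPDF _ _)
      (by fun_prop)).trans ?_
  have hpt : ∀ z : ℝ, (gaussianPDF 0 (⟨σ ^ 2, sq_nonneg σ⟩ : NNReal) * fun z =>
        ENNReal.ofReal (Real.exp (α * z ^ 2 + β * z + γ))) z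
      = ENNReal.ofReal ((Real.sqrt (2 * π * σ ^ 2))⁻¹ * Real.exp γ
          * Real.exp (-(b * z ^ 2) + β * z)) := by
    intro z
    simp only [Pi.mul_apply, gaussianPDF, gaussianPDFReal]
    rw [← ENNReal.ofReal_mul (by positivity)]
    congr 1
    push_cast
    have h : -(z - 0) ^ 2 / (2 * σ ^ 2) + (α * z ^ 2 + β * z + γ)
        = γ + (-(b * z ^ 2) + β * z) := by
      rw [hbdef]; field_simp; ring
    simp only [mul_assoc, ← Real.exp_add]
    congr 2
    try linarith [h]
  simp_rw [hpt]
  rw [← ofReal_integral_eq_lintegral_ofReal]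
  · rw [MeasureTheory.integral_const_mul, integral_exp_neg_mul_sq_add b β hb]
    congr 1
    set D : ℝ := 1 - 2 * σ ^ 2 * α with hDdef
    have hbD : b = D / (2 * σ ^ 2) := by
      rw [hbdef, hDdef]; field_simp
    have hπσ : (0:ℝ) < 2 * π * σ ^ 2 := by positivity
    have hsqrt : (Real.sqrt (2 * π * σ ^ 2))⁻¹ * Real.sqrt (π / b)
        = D ^ (-(1/2 : ℝ)) := by
      have h1 : π / b = (2 * π * σ ^ 2) / D := by
        rw [hbD]; field_simp
      rw [h1, Real.sqrt_div hπσ.le, Real.rpow_neg hD.le, ← Real.sqrt_eq_rpow]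
      have h2 : Real.sqrt (2 * π * σ ^ 2) ≠ 0 := by positivity
      field_simp
    have hexp : Real.exp γ * Real.exp (β ^ 2 / (4 * b))
        = Real.exp (γ + σ ^ 2 * β ^ 2 / (2 * D)) := by
      rw [← Real.exp_add]
      congr 1
      rw [hbD]
      field_simp
      ring
    calc (Real.sqrt (2 * π * σ ^ 2))⁻¹ * Real.exp γ
          * (Real.sqrt (π / b) * Real.exp (β ^ 2 / (4 * b)))
        = ((Real.sqrt (2 * π * σ ^ 2))⁻¹ * Real.sqrt (π / b))
          * (Real.exp γ * Real.exp (β ^ 2 / (4 * b))) := by ring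
      _ = D ^ (-(1/2 : ℝ)) * Real.exp (γ + σ ^ 2 * β ^ 2 / (2 * D)) := by
          rw [hsqrt, hexp]
  · exact (integrable_exp_neg_mul_sq_add b β hb).const_mul _
  · filter_upwards with x
    positivity

lemma step_lemma {Ω : Type*} [MeasurableSpace Ω] (μ : Measure Ω) [IsProbabilityMeasure μ]
    (a σ η s : ℝ) (hσ : 0 < σ)
    (Z : ℕ → Ω → ℝ) (hZmeas : ∀ i, Measurable (Z i))
    (hZindep : iIndepFun Z μ)
    (hZlaw : ∀ i, Measure.map (Z i) μ = gaussianReal 0 ⟨σ ^ 2, sq_nonneg σ⟩)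
    (U : ℕ → Ω → ℝ) (hU0 : U 0 = fun _ => 0)
    (hU : ∀ i, U (i + 1) = fun ω => a * U i ω + Z (i + 1) ω)
    (m : ℕ) (hm : 1 ≤ m) (αk αk1 : ℝ) (hαk : αk < 1 / (2 * σ ^ 2))
    (hrec : ∀ u w : ℝ, αk * a ^ 2 * u ^ 2 - s * η * u ^ 2 + w
          + σ ^ 2 * ((2 * αk * a + s) * u) ^ 2 / (2 * (1 - 2 * σ ^ 2 * αk))
        = αk1 * u ^ 2 + w) :
    ∫⁻ ω, ENNReal.ofReal (Real.exp (αk * (U (m + 1) ω) ^ 2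
        + s * ∑ i ∈ Finset.Icc 1 m, (U i ω * Z (i + 1) ω - η * (U i ω) ^ 2))) ∂μ
      = ENNReal.ofReal ((1 - 2 * σ ^ 2 * αk) ^ (-(1 / 2 : ℝ)))
        * ∫⁻ ω, ENNReal.ofReal (Real.exp (αk1 * (U m ω) ^ 2
            + s * ∑ i ∈ Finset.Icc 1 (m - 1),
              (U i ω * Z (i + 1) ω - η * (U i ω) ^ 2))) ∂μ := by
  obtain ⟨m', rfl⟩ : ∃ m', m = m' + 1 := ⟨m - 1, (Nat.sub_add_cancel hm).symm⟩
  have hσ2 : (0:ℝ) < σ ^ 2 := by positivity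
  have hD : (0:ℝ) < 1 - 2 * σ ^ 2 * αk := by
    have := (lt_div_iff₀ (by positivity : (0:ℝ) < 2 * σ ^ 2)).mp hαk
    nlinarith
  have hUmeas : ∀ i, Measurable (U i) := by
    intro i
    induction i with
    | zero => rw [hU0]; exact measurable_const
    | succ i ih => rw [hU i]; exact (ih.const_mul a).add (hZmeas (i + 1))
  -- the pair (U m, W)
  set W : Ω → ℝ := fun ω => s * ∑ i ∈ Finset.Icc 1 m',
      (U i ω * Z (i + 1) ω - η * (U i ω) ^ 2) with hWdef
  have hWmeas : Measurable W := by
    apply Measurable.const_mul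
    apply Finset.measurable_sum
    intro i _
    exact ((hUmeas i).mul (hZmeas (i + 1))).sub (((hUmeas i).pow_const 2).const_mul η)
  set X : Ω → ℝ × ℝ := fun ω => (U (m' + 1) ω, W ω) with hXdef
  have hXmeas : Measurable X := (hUmeas (m' + 1)).prodMk hWmeas
  -- X as a function of the noise vector
  set S : Finset ℕ := Finset.Icc 1 (m' + 1) with hSdef
  set Zvec : Ω → ({x // x ∈ S} → ℝ) := fun ω i => Z i ω with hZvecdef
  have hZvecmeas : Measurable Zvec := by
    apply measurable_pi_lambda
    intro i
    exact hZmeas i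
  have hlift : ∀ ω j, liftIcc (m' + 1) (Zvec ω) j
      = if j ∈ Finset.Icc 1 (m' + 1) then Z j ω else 0 := by
    intro ω j
    by_cases h : j ∈ Finset.Icc 1 (m' + 1) <;> simp [liftIcc, h, hZvecdef]
  have hGU : ∀ ω, ∀ i ≤ m' + 1, Grec a i (liftIcc (m' + 1) (Zvec ω)) = U i ω := by
    intro ω i
    induction i with
    | zero => intro _; rw [hU0]; simp [Grec]
    | succ i ih =>
        intro hi
        rw [hU i]
        simp only [Grec]
        rw [ih (by omega), hlift]
        have : i + 1 ∈ Finset.Icc 1 (m' + 1) := by simp; omega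
        simp [this]
  set F : ({x // x ∈ S} → ℝ) → ℝ × ℝ := fun v =>
      (Grec a (m' + 1) (liftIcc (m' + 1) v),
        s * ∑ i ∈ Finset.Icc 1 m',
          (Grec a i (liftIcc (m' + 1) v) * liftIcc (m' + 1) v (i + 1)
            - η * (Grec a i (liftIcc (m' + 1) v)) ^ 2)) with hFdef
  have hFmeas : Measurable F := by
    apply Measurable.prodMk
    · exact measurable_Grec_lift a (m' + 1) (m' + 1)
    · apply Measurable.const_mul
      apply Finset.measurable_sum
      intro i _
      exact ((measurable_Grec_lift a (m' + 1) i).mul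
        (measurable_liftIcc_apply (m' + 1) (i + 1))).sub
        (((measurable_Grec_lift a (m' + 1) i).pow_const 2).const_mul η)
  have hXF : X = F ∘ Zvec := by
    funext ω
    simp only [Function.comp_apply, hXdef, hFdef, Prod.mk.injEq]
    constructor
    · exact (hGU ω (m' + 1) le_rfl).symm
    · simp only [hWdef]
      congr 1
      apply Finset.sum_congr rfl
      intro i hi
      have hi' : i ≤ m' + 1 := by simp at hi; omega
      have hmem : i + 1 ∈ Finset.Icc 1 (m' + 1) := by simp at hi ⊢; omega
      rw [hGU ω i hi', hlift, if_pos hmem]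
  -- independence of X and Z (m' + 2)
  have hindep : IndepFun X (Z (m' + 2)) μ := by
    have hdisj : Disjoint S ({m' + 2} : Finset ℕ) := by
      simp [hSdef, Finset.disjoint_singleton_right]
    have h1 := hZindep.indepFun_finset S {m' + 2} hdisj hZmeas
    have h2 := h1.comp hFmeas
      (measurable_pi_apply (⟨m' + 2, by simp⟩ : {x // x ∈ ({m' + 2} : Finset ℕ)}))
    rw [hXF]
    exact h2
  -- the integrand as a function of (X, Z (m' + 2))
  haveI hprob : IsProbabilityMeasure (μ.map X) :=
    Measure.isProbabilityMeasure_map hXmeas.aemeasurable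
  haveI hprob2 : IsProbabilityMeasure (μ.map (Z (m' + 2))) :=
    Measure.isProbabilityMeasure_map (hZmeas _).aemeasurable
  set ψ : (ℝ × ℝ) × ℝ → ℝ≥0∞ := fun p =>
    ENNReal.ofReal (Real.exp (αk * (a * p.1.1 + p.2) ^ 2
      + s * (p.1.1 * p.2 - η * p.1.1 ^ 2) + p.1.2)) with hψdef
  have h11 : Measurable fun p : (ℝ × ℝ) × ℝ => p.1.1 := measurable_fst.fst
  have h12 : Measurable fun p : (ℝ × ℝ) × ℝ => p.1.2 := measurable_fst.snd
  have h2m : Measurable fun p : (ℝ × ℝ) × ℝ => p.2 := measurable_snd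
  have hψmeas : Measurable ψ := by
    apply ENNReal.measurable_ofReal.comp
    apply Real.measurable_exp.comp
    exact (((((h11.const_mul a).add h2m).pow_const 2).const_mul αk).add
      (((h11.mul h2m).sub ((h11.pow_const 2).const_mul η)).const_mul s)).add h12
  have hadd2 : m' + 1 + 1 = m' + 2 := rfl
  have hpt : ∀ ω, ENNReal.ofReal (Real.exp (αk * (U (m' + 1 + 1) ω) ^ 2
      + s * ∑ i ∈ Finset.Icc 1 (m' + 1), (U i ω * Z (i + 1) ω - η * (U i ω) ^ 2)))
      = ψ (X ω, Z (m' + 2) ω) := by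
    intro ω
    simp only [hψdef, hXdef, hWdef]
    congr 1
    rw [hU (m' + 1)]
    rw [Finset.sum_Icc_succ_top (by omega : 1 ≤ m' + 1)]
    rw [hadd2]
    congr 1
    ring
  have hg2 : Measurable fun q : ℝ × ℝ =>
      ENNReal.ofReal (Real.exp (αk1 * q.1 ^ 2 + q.2)) := by
    apply ENNReal.measurable_ofReal.comp
    apply Real.measurable_exp.comp
    exact ((measurable_fst.pow_const 2).const_mul αk1).add measurable_snd
  have hrpownn : (0:ℝ) ≤ (1 - 2 * σ ^ 2 * αk) ^ (-(1 / 2 : ℝ)) :=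
    Real.rpow_nonneg hD.le _
  simp only [hSdef]
  calc ∫⁻ ω, ENNReal.ofReal (Real.exp (αk * (U (m' + 1 + 1) ω) ^ 2
        + s * ∑ i ∈ Finset.Icc 1 (m' + 1), (U i ω * Z (i + 1) ω - η * (U i ω) ^ 2))) ∂μ
      = ∫⁻ ω, ψ (X ω, Z (m' + 2) ω) ∂μ := lintegral_congr hpt
    _ = ∫⁻ p, ψ p ∂(μ.map fun ω => (X ω, Z (m' + 2) ω)) :=
        (lintegral_map hψmeas (hXmeas.prodMk (hZmeas _))).symm
    _ = ∫⁻ p, ψ p ∂((μ.map X).prod (μ.map (Z (m' + 2)))) := by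
        rw [(indepFun_iff_map_prod_eq_prod_map_map hXmeas.aemeasurable
          (hZmeas _).aemeasurable).mp hindep]
    _ = ∫⁻ q, ∫⁻ z, ψ (q, z) ∂(μ.map (Z (m' + 2))) ∂(μ.map X) :=
        lintegral_prod _ hψmeas.aemeasurable
    _ = ∫⁻ q, ENNReal.ofReal ((1 - 2 * σ ^ 2 * αk) ^ (-(1 / 2 : ℝ)))
          * ENNReal.ofReal (Real.exp (αk1 * q.1 ^ 2 + q.2)) ∂(μ.map X) := by
        apply lintegral_congr
        intro q
        rw [hZlaw (m' + 2)]
        have hform : (fun z => ψ (q, z)) = fun z =>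
            ENNReal.ofReal (Real.exp (αk * z ^ 2 + ((2 * αk * a + s) * q.1) * z
              + (αk * a ^ 2 * q.1 ^ 2 - s * η * q.1 ^ 2 + q.2))) := by
          funext z
          simp only [hψdef]
          congr 2
          ring
        rw [hform, lintegral_exp_quadratic_gaussian hσ hαk]
        rw [hrec q.1 q.2]
        rw [ENNReal.ofReal_mul hrpownn]
    _ = ENNReal.ofReal ((1 - 2 * σ ^ 2 * αk) ^ (-(1 / 2 : ℝ)))
          * ∫⁻ q, ENNReal.ofReal (Real.exp (αk1 * q.1 ^ 2 + q.2)) ∂(μ.map X) :=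
        lintegral_const_mul _ hg2
    _ = ENNReal.ofReal ((1 - 2 * σ ^ 2 * αk) ^ (-(1 / 2 : ℝ)))
          * ∫⁻ ω, ENNReal.ofReal (Real.exp (αk1 * (U (m' + 1) ω) ^ 2
              + s * ∑ i ∈ Finset.Icc 1 (m' + 1 - 1),
                (U i ω * Z (i + 1) ω - η * (U i ω) ^ 2))) ∂μ := by
        rw [lintegral_map hg2 hXmeas]
        simp only [hXdef, hWdef, Nat.add_sub_cancel]

theorem statement0
    {Ω : Type*} [MeasurableSpace Ω] (μ : Measure Ω) [IsProbabilityMeasure μ]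
    (a σ : ℝ) (ha : 1 < a) (hσ : 0 < σ)
    (Z : ℕ → Ω → ℝ) (hZmeas : ∀ i, Measurable (Z i))
    (hZindep : iIndepFun Z μ)
    (hZlaw : ∀ i, Measure.map (Z i) μ = gaussianReal 0 ⟨σ ^ 2, sq_nonneg σ⟩)
    (U : ℕ → Ω → ℝ) (hU0 : U 0 = fun _ => 0)
    (hU : ∀ i, U (i + 1) = fun ω => a * U i ω + Z (i + 1) ω)
    (η : ℝ) (hη : 0 < η) (n : ℕ) (hn : 2 ≤ n)
    (s : ℝ) (hs : s ∈ Splus a σ η n) :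
    (μ {ω | aML U n ω - a > η}).toReal
      ≤ ∏ ℓ ∈ Finset.Icc 1 (n - 1), (1 - 2 * σ ^ 2 * alphaSeq a σ η s ℓ) ^ (-(1 / 2 : ℝ)) := by
  obtain ⟨hspos, hsα⟩ := hs
  have hσ2 : (0:ℝ) < σ ^ 2 := by positivity
  have ha0 : (0:ℝ) < a := lt_trans one_pos ha
  have hαlt : ∀ ℓ, ℓ ≤ n → alphaSeq a σ η s ℓ < 1 / (2 * σ ^ 2) := by
    intro ℓ hℓ
    rcases Nat.eq_zero_or_pos ℓ with h0 | h1
    · subst h0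
      simp only [alphaSeq]
      positivity
    · exact hsα ℓ (Finset.mem_Icc.mpr ⟨h1, hℓ⟩)
  have hDpos : ∀ ℓ, ℓ ≤ n → 0 < 1 - 2 * σ ^ 2 * alphaSeq a σ η s ℓ := by
    intro ℓ hℓ
    have := (lt_div_iff₀ (by positivity : (0:ℝ) < 2 * σ ^ 2)).mp (hαlt ℓ hℓ)
    nlinarith
  have hUmeas : ∀ i, Measurable (U i) := by
    intro i
    induction i with
    | zero => rw [hU0]; exact measurable_const
    | succ i ih => rw [hU i]; exact (ih.const_mul a).add (hZmeas (i + 1))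
  have hU1 : ∀ ω, U 1 ω = Z 1 ω := by
    intro ω
    rw [hU 0, hU0]
    simp
  -- the key backward induction
  have key : ∀ m, 1 ≤ m → m ≤ n →
      ∫⁻ ω, ENNReal.ofReal (Real.exp (alphaSeq a σ η s (n - m) * (U m ω) ^ 2
        + s * ∑ i ∈ Finset.Icc 1 (m - 1), (U i ω * Z (i + 1) ω - η * (U i ω) ^ 2))) ∂μ
      = ∏ ℓ ∈ Finset.Icc (n - m) (n - 1),
          ENNReal.ofReal ((1 - 2 * σ ^ 2 * alphaSeq a σ η s ℓ) ^ (-(1 / 2 : ℝ))) := by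
    intro m
    induction m with
    | zero => intro h; exact absurd h (by omega)
    | succ m ih =>
      intro _ hmn
      rcases Nat.eq_zero_or_pos m with rfl | hm1
      · -- base case : m + 1 = 1
        have hn1 : n - 1 ≤ n := by omega
        have hmeasg : Measurable fun x : ℝ => ENNReal.ofReal
            (Real.exp (alphaSeq a σ η s (n - 1) * x ^ 2 + 0 * x + 0)) := by
          apply ENNReal.measurable_ofReal.comp
          apply Real.measurable_exp.comp
          exact ((((measurable_id.pow_const 2).const_mul _).add
            ((measurable_id.const_mul 0))).add measurable_const)
        calc ∫⁻ ω, ENNReal.ofReal (Real.exp (alphaSeq a σ η s (n - (0 + 1)) * (U (0 + 1) ω) ^ 2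
              + s * ∑ i ∈ Finset.Icc 1 (0 + 1 - 1), (U i ω * Z (i + 1) ω - η * (U i ω) ^ 2))) ∂μ
            = ∫⁻ ω, ENNReal.ofReal (Real.exp (alphaSeq a σ η s (n - 1) * (Z 1 ω) ^ 2
                + 0 * (Z 1 ω) + 0)) ∂μ := by
              apply lintegral_congr
              intro ω
              congr 2
              simp [hU1 ω]
          _ = ∫⁻ x, ENNReal.ofReal (Real.exp (alphaSeq a σ η s (n - 1) * x ^ 2
                + 0 * x + 0)) ∂(Measure.map (Z 1) μ) :=
              (lintegral_map hmeasg (hZmeas 1)).symm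
          _ = ∏ ℓ ∈ Finset.Icc (n - (0 + 1)) (n - 1),
              ENNReal.ofReal ((1 - 2 * σ ^ 2 * alphaSeq a σ η s ℓ) ^ (-(1 / 2 : ℝ))) := by
              rw [hZlaw 1, lintegral_exp_quadratic_gaussian hσ (hαlt (n - 1) hn1) 0 0]
              simp [Real.exp_zero]
      · -- inductive step
        have hrec' : ∀ u w : ℝ,
            alphaSeq a σ η s (n - (m + 1)) * a ^ 2 * u ^ 2 - s * η * u ^ 2 + w
              + σ ^ 2 * ((2 * alphaSeq a σ η s (n - (m + 1)) * a + s) * u) ^ 2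
                / (2 * (1 - 2 * σ ^ 2 * alphaSeq a σ η s (n - (m + 1))))
            = alphaSeq a σ η s (n - m) * u ^ 2 + w := by
          have hsucc : n - m = (n - (m + 1)) + 1 := by omega
          rw [hsucc]
          exact alpha_rec a σ η s (ne_of_gt hσ) (n - (m + 1))
            (ne_of_gt (hDpos _ (by omega)))
        have hkey := step_lemma μ a σ η s hσ Z hZmeas hZindep hZlaw U hU0 hU m hm1
          (alphaSeq a σ η s (n - (m + 1))) (alphaSeq a σ η s (n - m))
          (hαlt _ (by omega)) hrec'
        have hm1' : m + 1 - 1 = m := by omega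
        rw [hm1'] at *
        rw [hkey, ih hm1 (by omega)]
        have hset : Finset.Icc (n - (m + 1)) (n - 1)
            = insert (n - (m + 1)) (Finset.Icc (n - m) (n - 1)) := by
          ext x
          simp only [Finset.mem_Icc, Finset.mem_insert]
          omega
        rw [hset, Finset.prod_insert (by simp only [Finset.mem_Icc]; omega)]
  -- Markov / Chernoff step
  have hVmeas : Measurable fun ω => ∑ i ∈ Finset.Icc 1 (n - 1),
      (U i ω * Z (i + 1) ω - η * (U i ω) ^ 2) := by
    apply Finset.measurable_sum
    intro i _
    exact ((hUmeas i).mul (hZmeas (i + 1))).sub (((hUmeas i).pow_const 2).const_mul η)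
  have hsub : {ω | aML U n ω - a > η} ⊆
      {ω | 0 < ∑ i ∈ Finset.Icc 1 (n - 1), (U i ω * Z (i + 1) ω - η * (U i ω) ^ 2)} := by
    intro ω hω
    simp only [Set.mem_setOf_eq, aML] at hω ⊢
    set D := ∑ i ∈ Finset.Icc 1 (n - 1), (U i ω) ^ 2 with hDdef
    set N := ∑ i ∈ Finset.Icc 1 (n - 1), U i ω * U (i + 1) ω with hNdef
    have hDnn : 0 ≤ D := Finset.sum_nonneg fun i _ => sq_nonneg _
    have hVND : ∑ i ∈ Finset.Icc 1 (n - 1), (U i ω * Z (i + 1) ω - η * (U i ω) ^ 2)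
        = N - (a + η) * D := by
      have hterm : ∀ i, U i ω * Z (i + 1) ω - η * (U i ω) ^ 2
          = U i ω * U (i + 1) ω - (a + η) * (U i ω) ^ 2 := by
        intro i
        rw [hU i]
        ring
      rw [Finset.sum_congr rfl fun i _ => hterm i, Finset.sum_sub_distrib,
        ← Finset.mul_sum, hNdef, hDdef]
    by_cases hD0 : D = 0
    · exfalso
      rw [hD0, div_zero] at hω
      linarith
    · have hDpos' : 0 < D := lt_of_le_of_ne hDnn (Ne.symm hD0)
      have h1 : a + η < N / D := by linarith
      have h2 := (lt_div_iff₀ hDpos').mp h1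
      rw [hVND]
      linarith
  have hmeasset : MeasurableSet {ω | 0 < ∑ i ∈ Finset.Icc 1 (n - 1),
      (U i ω * Z (i + 1) ω - η * (U i ω) ^ 2)} :=
    measurableSet_lt measurable_const hVmeas
  have hμle : μ {ω | aML U n ω - a > η}
      ≤ ∫⁻ ω, ENNReal.ofReal (Real.exp (alphaSeq a σ η s (n - n) * (U n ω) ^ 2
        + s * ∑ i ∈ Finset.Icc 1 (n - 1), (U i ω * Z (i + 1) ω - η * (U i ω) ^ 2))) ∂μ := by
    calc μ {ω | aML U n ω - a > η}
        ≤ μ {ω | 0 < ∑ i ∈ Finset.Icc 1 (n - 1),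
            (U i ω * Z (i + 1) ω - η * (U i ω) ^ 2)} := measure_mono hsub
      _ = ∫⁻ ω, Set.indicator {ω | 0 < ∑ i ∈ Finset.Icc 1 (n - 1),
            (U i ω * Z (i + 1) ω - η * (U i ω) ^ 2)} 1 ω ∂μ :=
          (lintegral_indicator_one hmeasset).symm
      _ ≤ _ := by
          apply lintegral_mono
          intro ω
          by_cases hω : 0 < ∑ i ∈ Finset.Icc 1 (n - 1),
              (U i ω * Z (i + 1) ω - η * (U i ω) ^ 2)
          · have hmem : ω ∈ {ω | 0 < ∑ i ∈ Finset.Icc 1 (n - 1),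
                (U i ω * Z (i + 1) ω - η * (U i ω) ^ 2)} := hω
            rw [Set.indicator_of_mem hmem]
            simp only [Pi.one_apply]
            rw [ENNReal.one_le_ofReal]
            apply Real.one_le_exp
            have h0 : alphaSeq a σ η s (n - n) = 0 := by
              rw [Nat.sub_self]
              rfl
            rw [h0]
            have : 0 ≤ s * ∑ i ∈ Finset.Icc 1 (n - 1),
                (U i ω * Z (i + 1) ω - η * (U i ω) ^ 2) :=
              mul_nonneg hspos.le hω.le
            linarith
          · have hmem : ω ∉ {ω | 0 < ∑ i ∈ Finset.Icc 1 (n - 1),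
                (U i ω * Z (i + 1) ω - η * (U i ω) ^ 2)} := hω
            rw [Set.indicator_of_notMem hmem]
            exact zero_le
  have hfinal : μ {ω | aML U n ω - a > η}
      ≤ ∏ ℓ ∈ Finset.Icc 1 (n - 1),
          ENNReal.ofReal ((1 - 2 * σ ^ 2 * alphaSeq a σ η s ℓ) ^ (-(1 / 2 : ℝ))) := by
    refine le_trans hμle ?_
    rw [key n (by omega) le_rfl]
    have hset0 : Finset.Icc (n - n) (n - 1) = insert 0 (Finset.Icc 1 (n - 1)) := by
      ext x
      simp only [Finset.mem_Icc, Finset.mem_insert]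
      omega
    rw [hset0, Finset.prod_insert (by simp only [Finset.mem_Icc]; omega)]
    have h0 : alphaSeq a σ η s 0 = 0 := rfl
    rw [h0]
    norm_num
  have hnonneg : ∀ ℓ ∈ Finset.Icc 1 (n - 1),
      (0:ℝ) ≤ (1 - 2 * σ ^ 2 * alphaSeq a σ η s ℓ) ^ (-(1 / 2 : ℝ)) := by
    intro ℓ hℓ
    have hℓn : ℓ ≤ n := by simp only [Finset.mem_Icc] at hℓ; omega
    exact Real.rpow_nonneg (hDpos ℓ hℓn).le _
  rw [← ENNReal.ofReal_prod_of_nonneg hnonneg] at hfinal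
  calc (μ {ω | aML U n ω - a > η}).toReal
      ≤ (ENNReal.ofReal (∏ ℓ ∈ Finset.Icc 1 (n - 1),
          (1 - 2 * σ ^ 2 * alphaSeq a σ η s ℓ) ^ (-(1 / 2 : ℝ)))).toReal :=
        ENNReal.toReal_mono ENNReal.ofReal_ne_top hfinal
    _ = ∏ ℓ ∈ Finset.Icc 1 (n - 1),
          (1 - 2 * σ ^ 2 * alphaSeq a σ η s ℓ) ^ (-(1 / 2 : ℝ)) :=
        ENNReal.toReal_ofReal (Finset.prod_nonneg hnonneg)
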